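/- Let (A,·) be the semigroup K-algebra of the rectangular band I×J and let * be an associative bilinear product on A that is (12)-matching with ·. Then there exist a scalar λ ∈ K (independent of i and j) and elements r_{ij} ∈ Ann(A) such that e_{ij} * e_{ij} = λe_{ij} + r_{ij} for all (i,j) ∈ I×J. -/

import Mathlib

/-- For the semigroup algebra `(A, ·)` of the rectangular band `I × J` over a field `K`
and an associative bilinear product `*` on `A` that is `(12)`-matching with `·`, there
exist `λ ∈ K` (independent of `i, j`) and elements `r_{ij} ∈ Ann(A)` such that
`e_{ij} * e_{ij} = λ • e_{ij} + r_{ij}` for all `(i,j) ∈ I × J`. -/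
theorem twelve_matching_diagonal_decomposition {K A I J : Type*} [Field K]
    [NonUnitalRing A] [Module K A] [SMulCommClass K A A] [IsScalarTower K A A]
    [Nonempty I] [Nonempty J]
    (e : Module.Basis (I × J) K A)
    (hmul : ∀ (i k : I) (j l : J), e (i, j) * e (k, l) = e (i, l))
    (star : A →ₗ[K] A →ₗ[K] A)
    (hassoc : ∀ a b c : A, star (star a b) c = star a (star b c))
    (hmatch1 : ∀ a b c : A, star a b * c = a * star b c)
    (hmatch2 : ∀ a b c : A, star (a * b) c = star a (b * c)) :
    ∃ lam : K, ∀ (i : I) (j : J), ∃ r : A,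
      (∀ b : A, r * b = 0 ∧ b * r = 0) ∧
      star (e (i, j)) (e (i, j)) = lam • e (i, j) + r := by
  classical
  -- the "sum of coordinates" functional
  set σ : A →ₗ[K] K :=
    (Finsupp.linearCombination K (fun _ : I × J => (1 : K))) ∘ₗ e.repr.toLinearMap with hσdef
  have hσ : ∀ p : I × J, σ (e p) = 1 := by
    intro p
    simp [hσdef, Finsupp.linearCombination_single]
  -- conjugation by a basis vector extracts the coordinate sum
  have L1 : ∀ (i : I) (j : J) (a : A), e (i, j) * a * e (i, j) = σ a • e (i, j) := by
    intro i j a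
    have key : (LinearMap.mulRight K (e (i, j))) ∘ₗ (LinearMap.mulLeft K (e (i, j)))
        = σ.smulRight (e (i, j)) := by
      apply e.ext
      rintro ⟨k, l⟩
      simp only [LinearMap.coe_comp, Function.comp_apply, LinearMap.mulLeft_apply,
        LinearMap.mulRight_apply, LinearMap.smulRight_apply, hσ, one_smul, hmul]
    have := LinearMap.congr_fun key a
    simpa using this
  -- right multiplication by a basis vector does not depend on its row index
  have F1 : ∀ (a : A) (k k' : I) (l : J), a * e (k, l) = a * e (k', l) := by
    intro a k k' l
    have key : LinearMap.mulRight K (e (k, l)) = LinearMap.mulRight K (e (k', l)) := by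
      apply e.ext
      rintro ⟨p, q⟩
      simp [hmul]
    exact LinearMap.congr_fun key a
  -- left multiplication by a basis vector does not depend on its column index
  have F2 : ∀ (a : A) (k : I) (l l' : J), e (k, l) * a = e (k, l') * a := by
    intro a k l l'
    have key : LinearMap.mulLeft K (e (k, l)) = LinearMap.mulLeft K (e (k, l')) := by
      apply e.ext
      rintro ⟨p, q⟩
      simp [hmul]
    exact LinearMap.congr_fun key a
  set lam : I × J → K := fun p => σ (star (e p) (e p)) with hlamdef
  -- the decomposition with coefficient `lam (i,j)`
  have decomp : ∀ (i : I) (j : J),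
      star (e (i, j)) (e (i, j)) = lam (i, j) • e (i, j) +
        (star (e (i, j)) (e (i, j)) - lam (i, j) • e (i, j)) := by
    intro i j; abel
  have hA : ∀ (i : I) (j : J),
      star (e (i, j)) (e (i, j)) * e (i, j) = e (i, j) * star (e (i, j)) (e (i, j)) :=
    fun i j => hmatch1 _ _ _
  have hxsx : ∀ (i : I) (j : J),
      e (i, j) * star (e (i, j)) (e (i, j)) * e (i, j) = lam (i, j) • e (i, j) :=
    fun i j => L1 i j _
  -- s * e(k,l) = lam • e(i,l)
  have hs_r : ∀ (i k : I) (j l : J),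
      star (e (i, j)) (e (i, j)) * e (k, l) = lam (i, j) • e (i, l) := by
    intro i k j l
    set x := e (i, j)
    set s := star x x with hs
    calc s * e (k, l) = s * e (i, l) := F1 s k i l
      _ = s * (x * e (i, l)) := by rw [hmul i i j l]
      _ = s * x * e (i, l) := by rw [mul_assoc]
      _ = x * s * e (i, l) := by rw [hA i j]
      _ = x * s * (x * e (i, l)) := by rw [hmul i i j l]
      _ = (x * s * x) * e (i, l) := by rw [mul_assoc (x * s)]
      _ = (lam (i, j) • x) * e (i, l) := by rw [hxsx i j]
      _ = lam (i, j) • (x * e (i, l)) := smul_mul_assoc _ _ _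
      _ = lam (i, j) • e (i, l) := by rw [hmul i i j l]
  -- e(k,l) * s = lam • e(k,j)
  have hs_l : ∀ (i k : I) (j l : J),
      e (k, l) * star (e (i, j)) (e (i, j)) = lam (i, j) • e (k, j) := by
    intro i k j l
    set x := e (i, j)
    set s := star x x with hs
    calc e (k, l) * s = e (k, j) * s := F2 s k l j
      _ = (e (k, j) * x) * s := by rw [hmul k i j j]
      _ = e (k, j) * (x * s) := mul_assoc _ _ _
      _ = e (k, j) * (s * x) := by rw [hA i j]
      _ = e (k, j) * (lam (i, j) • e (i, j)) := by rw [hs_r i i j j]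
      _ = lam (i, j) • (e (k, j) * x) := mul_smul_comm _ _ _
      _ = lam (i, j) • e (k, j) := by rw [hmul k i j j]
  -- the remainders are annihilators
  have hann : ∀ (i : I) (j : J) (b : A),
      (star (e (i, j)) (e (i, j)) - lam (i, j) • e (i, j)) * b = 0 ∧
      b * (star (e (i, j)) (e (i, j)) - lam (i, j) • e (i, j)) = 0 := by
    intro i j b
    set r := star (e (i, j)) (e (i, j)) - lam (i, j) • e (i, j) with hr
    constructor
    · have key : LinearMap.mulLeft K r = 0 := by
        apply e.ext
        rintro ⟨k, l⟩
        simp only [LinearMap.mulLeft_apply, LinearMap.zero_apply, hr, sub_mul, smul_mul_assoc,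
          hs_r i k j l, hmul i k j l, sub_self]
      simpa using LinearMap.congr_fun key b
    · have key : LinearMap.mulRight K r = 0 := by
        apply e.ext
        rintro ⟨k, l⟩
        simp only [LinearMap.mulRight_apply, LinearMap.zero_apply, hr, mul_sub, mul_smul_comm,
          hs_l i k j l, hmul k i l j, sub_self]
      simpa using LinearMap.congr_fun key b
  -- lam is independent of the column index
  have hcol : ∀ (i : I) (j l : J), lam (i, j) = lam (i, l) := by
    intro i j l
    have hkey : star (e (i, j)) (e (i, j)) = star (e (i, l)) (e (i, j)) := by
      have := hmatch2 (e (i, l)) (e (i, j)) (e (i, j))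
      rwa [hmul i i l j, hmul i i j j] at this
    have main : lam (i, j) • e (i, l) = lam (i, l) • e (i, l) := by
      calc lam (i, j) • e (i, l)
          = e (i, l) * star (e (i, j)) (e (i, j)) * e (i, l) := (L1 i l _).symm
        _ = e (i, l) * star (e (i, l)) (e (i, j)) * e (i, l) := by rw [hkey]
        _ = star (e (i, l)) (e (i, l)) * e (i, j) * e (i, l) := by rw [← hmatch1]
        _ = star (e (i, l)) (e (i, l)) * (e (i, j) * e (i, l)) := mul_assoc _ _ _
        _ = star (e (i, l)) (e (i, l)) * e (i, l) := by rw [hmul i i j l]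
        _ = lam (i, l) • e (i, l) := hs_r i i l l
    have := congrArg (fun v => e.repr v (i, l)) main
    simpa using this
  -- lam is independent of the row index
  have hrow : ∀ (i k : I) (j : J), lam (i, j) = lam (k, j) := by
    intro i k j
    have hkey : ∀ (p r : I), star (e (p, j)) (e (p, j)) = star (e (p, j)) (e (r, j)) := by
      intro p r
      have := hmatch2 (e (p, j)) (e (r, j)) (e (p, j))
      rwa [hmul p r j j, hmul r p j j] at this
    have main : lam (i, j) • e (k, j) = lam (k, j) • e (k, j) := by
      calc lam (i, j) • e (k, j)
          = e (k, j) * star (e (i, j)) (e (i, j)) * e (k, j) := (L1 k j _).symm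
        _ = e (k, j) * star (e (i, j)) (e (k, j)) * e (k, j) := by rw [hkey i k]
        _ = star (e (k, j)) (e (i, j)) * e (k, j) * e (k, j) := by rw [← hmatch1]
        _ = star (e (k, j)) (e (i, j)) * (e (k, j) * e (k, j)) := mul_assoc _ _ _
        _ = star (e (k, j)) (e (i, j)) * e (k, j) := by rw [hmul k k j j]
        _ = star (e (k, j)) (e (k, j)) * e (k, j) := by rw [← hkey k i]
        _ = lam (k, j) • e (k, j) := hs_r k k j j
    have := congrArg (fun v => e.repr v (k, j)) main
    simpa using this
  obtain ⟨i₀⟩ := ‹Nonempty I›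
  obtain ⟨j₀⟩ := ‹Nonempty J›
  refine ⟨lam (i₀, j₀), fun i j => ?_⟩
  have hlam : lam (i, j) = lam (i₀, j₀) := by
    rw [hrow i i₀ j, hcol i₀ j j₀]
  refine ⟨star (e (i, j)) (e (i, j)) - lam (i, j) • e (i, j), hann i j, ?_⟩
  rw [← hlam]
  exact decomp i j
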